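/- Let h ∈ F_q[t] be a monic squarefree polynomial with factorization h = p_1 ⋯ p_m into distinct monic irreducible polynomials, and let s = min_i deg(p_i). Suppose for each i we are given a polynomial c_i ∈ F_q[t] with deg(c_i) ≤ deg(p_i)/2. Then the polynomial ∏_i (p_i + c_i) is monic of the same degree as h, and deg(h - ∏_i (p_i + c_i)) ≤ deg(h) - ⌈s/2⌉. -/

import Mathlib

open Polynomial

lemma keyaux {F : Type*} [Field F] {ι : Type*} [DecidableEq ι]
    (p c : ι → F[X]) (k : ℕ) (hk0 : 0 < k)
    (hp : ∀ i, (p i).Monic)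
    (hkn : ∀ i, k ≤ (p i).natDegree)
    (hc : ∀ i, (c i).degree ≤ (((p i).natDegree - k : ℕ) : WithBot ℕ)) :
    ∀ S : Finset ι,
      ((∏ i ∈ S, p i - ∏ i ∈ S, (p i + c i)).degree + (k : WithBot ℕ)
        ≤ ((∑ i ∈ S, (p i).natDegree : ℕ) : WithBot ℕ))
      ∧ (∏ i ∈ S, (p i + c i)).Monic
      ∧ (∏ i ∈ S, (p i + c i)).natDegree = ∑ i ∈ S, (p i).natDegree := by
  have hclt : ∀ i, (c i).degree < (p i).degree := fun i => by
    refine lt_of_le_of_lt (hc i) ?_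
    rw [degree_eq_natDegree (hp i).ne_zero]
    exact_mod_cast Nat.sub_lt (lt_of_lt_of_le hk0 (hkn i)) hk0
  have hmono : ∀ i, (p i + c i).Monic := fun i => (hp i).add_of_left (hclt i)
  have hdegpc : ∀ i, (p i + c i).natDegree = (p i).natDegree := fun i => by
    rw [← natDegree_eq_of_degree_eq (degree_add_eq_left_of_degree_lt (hclt i))]
  intro S
  induction S using Finset.induction with
  | empty => simp
  | @insert a S hna ih =>
    obtain ⟨ihdeg, ihmon, ihnat⟩ := ih
    have hmonQ : (∏ i ∈ insert a S, (p i + c i)).Monic := by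
      rw [Finset.prod_insert hna]; exact (hmono a).mul ihmon
    have hnatQ : (∏ i ∈ insert a S, (p i + c i)).natDegree = ∑ i ∈ insert a S, (p i).natDegree := by
      rw [Finset.prod_insert hna, Finset.sum_insert hna,
        (hmono a).natDegree_mul ihmon, hdegpc, ihnat]
    refine ⟨?_, hmonQ, hnatQ⟩
    rw [Finset.prod_insert hna, Finset.prod_insert hna, Finset.sum_insert hna]
    have expand : p a * ∏ i ∈ S, p i - (p a + c a) * ∏ i ∈ S, (p i + c i)
        = p a * (∏ i ∈ S, p i - ∏ i ∈ S, (p i + c i)) - c a * ∏ i ∈ S, (p i + c i) := by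
      ring
    rw [expand]
    have h1 : (p a * (∏ i ∈ S, p i - ∏ i ∈ S, (p i + c i))).degree + (k : WithBot ℕ)
        ≤ (((p a).natDegree + ∑ i ∈ S, (p i).natDegree : ℕ) : WithBot ℕ) := by
      rw [degree_mul, degree_eq_natDegree (hp a).ne_zero, add_assoc]
      push_cast
      exact add_le_add_right (by exact_mod_cast ihdeg) _
    have h2 : (c a * ∏ i ∈ S, (p i + c i)).degree + (k : WithBot ℕ)
        ≤ (((p a).natDegree + ∑ i ∈ S, (p i).natDegree : ℕ) : WithBot ℕ) := by
      rw [degree_mul]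
      calc (c a).degree + (∏ i ∈ S, (p i + c i)).degree + (k : WithBot ℕ)
          ≤ (((p a).natDegree - k : ℕ) : WithBot ℕ) + ((∑ i ∈ S, (p i).natDegree : ℕ) : WithBot ℕ)
              + (k : WithBot ℕ) := by
            refine add_le_add_left (add_le_add (hc a) ?_) _
            rw [degree_eq_natDegree ihmon.ne_zero, ihnat]
        _ = (((p a).natDegree - k + ∑ i ∈ S, (p i).natDegree + k : ℕ) : WithBot ℕ) := by
            push_cast; ring
        _ = (((p a).natDegree + ∑ i ∈ S, (p i).natDegree : ℕ) : WithBot ℕ) := by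
            congr 1
            have := hkn a; omega
    calc (p a * (∏ i ∈ S, p i - ∏ i ∈ S, (p i + c i)) - c a * ∏ i ∈ S, (p i + c i)).degree
          + (k : WithBot ℕ)
        ≤ max ((p a * (∏ i ∈ S, p i - ∏ i ∈ S, (p i + c i))).degree + (k : WithBot ℕ))
            ((c a * ∏ i ∈ S, (p i + c i)).degree + (k : WithBot ℕ)) := by
          exact add_le_add_left (degree_sub_le _ _) _ |>.trans (le_of_eq (max_add_add_right _ _ _).symm) |>.trans_eq rfl
      _ ≤ _ := max_le h1 h2

/-- If `h = ∏ pᵢ` is monic squarefree with distinct monic irreducible factors `pᵢ`,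
`s` the minimal factor degree, and `deg cᵢ ≤ deg pᵢ / 2`, then `∏ (pᵢ + cᵢ)` is monic
of the same degree as `h`, and `deg(h - ∏(pᵢ + cᵢ)) ≤ deg h - ⌈s/2⌉`. -/
theorem stmt0 {F : Type*} [Field F] {m : ℕ} (hm : 0 < m)
    (p : Fin m → F[X]) (hmon : ∀ i, (p i).Monic) (hirr : ∀ i, Irreducible (p i))
    (hdist : Function.Injective p)
    (h : F[X]) (hh : h = ∏ i, p i)
    (c : Fin m → F[X]) (hc : ∀ i, (c i).degree ≤ ((p i).natDegree / 2 : ℕ))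
    (s : ℕ) (hs : s = Finset.univ.inf' ⟨⟨0, hm⟩, Finset.mem_univ _⟩ fun i => (p i).natDegree) :
    (∏ i, (p i + c i)).Monic ∧ (∏ i, (p i + c i)).natDegree = h.natDegree ∧
      (h - ∏ i, (p i + c i)).degree ≤ ((h.natDegree - (s + 1) / 2 : ℕ) : WithBot ℕ) := by
  have hn1 : ∀ i, 1 ≤ (p i).natDegree := fun i => (hirr i).natDegree_pos
  have hsle : ∀ i, s ≤ (p i).natDegree := fun i => by
    rw [hs]; exact Finset.inf'_le _ (Finset.mem_univ i)
  have hs1 : 1 ≤ s := by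
    rw [hs]; exact Finset.le_inf' _ _ fun i _ => hn1 i
  set k := (s + 1) / 2 with hk
  have hk0 : 0 < k := by omega
  have hkn : ∀ i, k ≤ (p i).natDegree := fun i => by have := hsle i; omega
  have hc' : ∀ i, (c i).degree ≤ (((p i).natDegree - k : ℕ) : WithBot ℕ) := fun i => by
    have h2 : (p i).natDegree / 2 ≤ (p i).natDegree - k := by have := hsle i; omega
    exact (hc i).trans (by exact_mod_cast h2)
  obtain ⟨hdeg, hmonQ, hnatQ⟩ := keyaux p c k hk0 hmon hkn hc' Finset.univ
  have hN : h.natDegree = ∑ i, (p i).natDegree := by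
    rw [hh]; exact natDegree_prod _ _ fun i _ => (hmon i).ne_zero
  refine ⟨hmonQ, by rw [hnatQ, hN], ?_⟩
  rw [hh]
  rcases hD : (∏ i, p i - ∏ i, (p i + c i)).degree with _ | d
  · exact bot_le
  · rw [hD] at hdeg
    rw [show (Option.some d : WithBot ℕ) = ((d : ℕ) : WithBot ℕ) from rfl] at hdeg ⊢
    have hdk : d + k ≤ ∑ i, (p i).natDegree := by exact_mod_cast hdeg
    have hkN : k ≤ ∑ i, (p i).natDegree :=
      (hkn ⟨0, hm⟩).trans (Finset.single_le_sum (f := fun i => (p i).natDegree)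
        (fun i _ => Nat.zero_le _) (Finset.mem_univ _))
    have hN' : (∏ i, p i).natDegree = ∑ i, (p i).natDegree :=
      natDegree_prod _ _ fun i _ => (hmon i).ne_zero
    have hfin : d ≤ (∏ i, p i).natDegree - k := by omega
    exact_mod_cast hfin
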